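/- Frobenius norm bound for communication-limited channels: if W is a channel from [k] to Y with |Y| = 2^ℓ and Σ_x W(y|x) > 0 for all y, then ‖H(W)‖_F² ≤ 2^{ℓ+1}. -/

import Mathlib

/-- The matrix `H(W)` associated to a channel `W` from `[k]` (with `k = 2m`). -/
noncomputable def Hmat {Y : Type*} [Fintype Y] (m : ℕ) (W : Fin m × Bool → Y → ℝ) :
    Matrix (Fin m) (Fin m) ℝ :=
  Matrix.of fun i₁ i₂ => ∑ y,
    (W (i₁, false) y - W (i₁, true) y) * (W (i₂, false) y - W (i₂, true) y) / ∑ x, W x y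

/-- Weighted Cauchy–Schwarz quadratic-form bound. -/
lemma key_quadform {Y : Type*} [Fintype Y] {m : ℕ} (d p : Fin m → Y → ℝ) (S : Y → ℝ)
    (hp : ∀ i y, 0 ≤ p i y) (hd : ∀ i y, |d i y| ≤ p i y)
    (hS : ∀ y, ∑ i, p i y ≤ S y) (hS0 : ∀ y, 0 < S y)
    (hp2 : ∀ i, ∑ y, p i y ≤ 2) (v : Fin m → ℝ) :
    ∑ y, (∑ i, v i * d i y) ^ 2 / S y ≤ 2 * ∑ i, v i ^ 2 := by
  have step : ∀ y, (∑ i, v i * d i y) ^ 2 / S y ≤ ∑ i, v i ^ 2 * p i y := by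
    intro y
    set g : Fin m → ℝ := fun i => if p i y = 0 then 0 else d i y ^ 2 / p i y with hg
    have hCS : (∑ i, v i * d i y) ^ 2 ≤ (∑ i, v i ^ 2 * p i y) * ∑ i, g i := by
      refine Finset.sum_sq_le_sum_mul_sum_of_sq_eq_mul _
        (fun i _ => mul_nonneg (sq_nonneg _) (hp i y)) (fun i _ => ?_) (fun i _ => ?_)
      · by_cases h : p i y = 0 <;> simp [hg, h]
        exact div_nonneg (sq_nonneg _) (hp i y)
      · by_cases h : p i y = 0
        · have hd0 : d i y = 0 := by
            have := hd i y; rw [h] at this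
            exact abs_nonpos_iff.mp this
          simp [hg, h, hd0]
        · simp only [hg, h, if_false]
          field_simp
    have hgle : ∑ i, g i ≤ S y := by
      refine le_trans (Finset.sum_le_sum (fun i _ => ?_)) (hS y)
      by_cases h : p i y = 0
      · simp [hg, h, hp i y]
      · have hpos : 0 < p i y := lt_of_le_of_ne (hp i y) (Ne.symm h)
        simp only [hg, h, if_false]
        rw [div_le_iff₀ hpos]
        have : |d i y| ^ 2 ≤ p i y ^ 2 := by
          have := hd i y
          nlinarith [abs_nonneg (d i y)]
        calc d i y ^ 2 = |d i y| ^ 2 := (sq_abs _).symm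
          _ ≤ p i y ^ 2 := this
          _ = p i y * p i y := sq (p i y) ▸ by ring
    rw [div_le_iff₀ (hS0 y)]
    calc (∑ i, v i * d i y) ^ 2 ≤ (∑ i, v i ^ 2 * p i y) * ∑ i, g i := hCS
      _ ≤ (∑ i, v i ^ 2 * p i y) * S y := by
          apply mul_le_mul_of_nonneg_left hgle
          exact Finset.sum_nonneg fun i _ => mul_nonneg (sq_nonneg _) (hp i y)
  calc ∑ y, (∑ i, v i * d i y) ^ 2 / S y ≤ ∑ y, ∑ i, v i ^ 2 * p i y :=
        Finset.sum_le_sum fun y _ => step y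
    _ = ∑ i, v i ^ 2 * ∑ y, p i y := by
        rw [Finset.sum_comm]
        exact Finset.sum_congr rfl fun i _ => by rw [Finset.mul_sum]
    _ ≤ ∑ i, v i ^ 2 * 2 := Finset.sum_le_sum fun i _ =>
        mul_le_mul_of_nonneg_left (hp2 i) (sq_nonneg _)
    _ = 2 * ∑ i, v i ^ 2 := by rw [← Finset.sum_mul]; ring

/-- Frobenius norm bound for communication-limited channels: if `|Y| = 2^ℓ` then
`‖H(W)‖_F² ≤ 2^{ℓ+1}`. -/
theorem Hmat_frobenius_sq_le_comm {Y : Type*} [Fintype Y] (m ℓ : ℕ)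
    (hY : Fintype.card Y = 2 ^ ℓ) (W : Fin m × Bool → Y → ℝ)
    (hW0 : ∀ x y, 0 ≤ W x y) (hW1 : ∀ x, ∑ y, W x y = 1)
    (hWy : ∀ y, 0 < ∑ x, W x y) :
    ∑ i₁, ∑ i₂, (Hmat m W i₁ i₂) ^ 2 ≤ (2 : ℝ) ^ (ℓ + 1) := by
  classical
  set d : Fin m → Y → ℝ := fun i y => W (i, false) y - W (i, true) y with hd_def
  set p : Fin m → Y → ℝ := fun i y => W (i, false) y + W (i, true) y with hp_def
  set S : Y → ℝ := fun y => ∑ x, W x y with hS_def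
  have hW1' : ∀ x y, W x y ≤ 1 := by
    intro x y
    calc W x y ≤ ∑ y', W x y' :=
          Finset.single_le_sum (fun y' _ => hW0 x y') (Finset.mem_univ y)
      _ = 1 := hW1 x
  have hp : ∀ i y, 0 ≤ p i y := fun i y => add_nonneg (hW0 _ _) (hW0 _ _)
  have hd : ∀ i y, |d i y| ≤ p i y := by
    intro i y
    rw [abs_le]
    constructor <;> simp only [hd_def, hp_def] <;> nlinarith [hW0 (i, false) y, hW0 (i, true) y]
  have hd1 : ∀ i y, |d i y| ≤ 1 := by
    intro i y
    rw [abs_le]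
    constructor <;> simp only [hd_def] <;>
      nlinarith [hW0 (i, false) y, hW0 (i, true) y, hW1' (i, false) y, hW1' (i, true) y]
  have hSsum : ∀ y, S y = ∑ i, p i y := by
    intro y
    simp only [hS_def, hp_def, Fintype.sum_prod_type, Fintype.sum_bool]
    exact Finset.sum_congr rfl fun i _ => by ring
  have hS0 : ∀ y, 0 < S y := hWy
  have hp2 : ∀ i, ∑ y, p i y ≤ 2 := by
    intro i
    simp only [hp_def, Finset.sum_add_distrib, hW1]
    norm_num
  have hdsq : ∀ y, ∑ i, d i y ^ 2 ≤ S y := by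
    intro y
    rw [hSsum y]
    refine Finset.sum_le_sum fun i _ => ?_
    nlinarith [sq_abs (d i y), hd i y, hd1 i y, abs_nonneg (d i y)]
  -- rearrangement of the Frobenius norm
  have key : ∀ (F : Fin m × Fin m → Y → ℝ),
      ∑ a : Fin m × Fin m, (∑ y, F a y) ^ 2 = ∑ y, ∑ y', ∑ a : Fin m × Fin m, F a y * F a y' := by
    intro F
    simp only [sq, Finset.sum_mul_sum]
    rw [Finset.sum_comm]
    exact Finset.sum_congr rfl fun y _ => Finset.sum_comm
  have expand : ∑ i₁, ∑ i₂, (Hmat m W i₁ i₂) ^ 2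
      = ∑ y, (∑ y', (∑ i, d i y * d i y') ^ 2 / S y') / S y := by
    have h1 : ∑ i₁, ∑ i₂, (Hmat m W i₁ i₂) ^ 2
        = ∑ a : Fin m × Fin m, (∑ y, d a.1 y * d a.2 y / S y) ^ 2 := by
      rw [Fintype.sum_prod_type]
      rfl
    rw [h1, key]
    refine Finset.sum_congr rfl fun y _ => ?_
    rw [Finset.sum_div]
    refine Finset.sum_congr rfl fun y' _ => ?_
    rw [Fintype.sum_prod_type]
    have h2 : ∑ i₁, ∑ i₂, (d i₁ y * d i₂ y / S y) * (d i₁ y' * d i₂ y' / S y')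
        = ((∑ i₁, d i₁ y * d i₁ y') * ∑ i₂, d i₂ y * d i₂ y') / (S y * S y') := by
      rw [Finset.sum_mul_sum, Finset.sum_div]
      refine Finset.sum_congr rfl fun i₁ _ => ?_
      rw [Finset.sum_div]
      refine Finset.sum_congr rfl fun i₂ _ => ?_
      field_simp
    rw [h2]
    field_simp
  rw [expand]
  have bound : ∀ y, (∑ y', (∑ i, d i y * d i y') ^ 2 / S y') / S y ≤ 2 := by
    intro y
    rw [div_le_iff₀ (hS0 y)]
    calc ∑ y', (∑ i, d i y * d i y') ^ 2 / S y'
        ≤ 2 * ∑ i, d i y ^ 2 :=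
          key_quadform d p S hp hd (fun y' => (hSsum y').ge) hS0 hp2 (fun i => d i y)
      _ ≤ 2 * S y := by linarith [hdsq y]
  calc ∑ y, (∑ y', (∑ i, d i y * d i y') ^ 2 / S y') / S y
      ≤ ∑ y : Y, (2 : ℝ) := Finset.sum_le_sum fun y _ => bound y
    _ = (Fintype.card Y : ℝ) * 2 := by rw [Finset.sum_const]; simp [mul_comm]
    _ = (2 : ℝ) ^ (ℓ + 1) := by rw [hY]; push_cast; ring
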